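/- Let h ≥ 1, ε ∈ ℂ*, γ : ℤ → ℂ with γ(n+2h) = ε·γ(n), and X : ℤ → ℂ* satisfy X(n+2h)·X(n) = −(1/P(n))·(1/P(n) + γ(n)) for all n, where P(n) = ∏_{k=1}^{2h−1} X(n+k). Then for all n the following identity holds: ε/∏_{k=0}^{2h−1} X(n+k+1) − 1/∏_{k=0}^{2h−1} X(n+k+2h) = −ε·∏_{k=0}^{2h−1} X(n+k) + X(n+4h)·∏_{k=0}^{2h−2} X(n+k+2h+1). -/

import Mathlib

theorem stmt_14 (h : ℕ) (hh : 1 ≤ h) (ε : ℂ) (hε : ε ≠ 0) (γ : ℤ → ℂ)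
    (hγ : ∀ n : ℤ, γ (n + 2 * h) = ε * γ n)
    (X : ℤ → ℂ) (hX : ∀ n : ℤ, X n ≠ 0)
    (hXeq : ∀ n : ℤ,
      X (n + 2 * h) * X n
        = -(1 / ∏ k ∈ Finset.range (2 * h - 1), X (n + k + 1))
            * (1 / (∏ k ∈ Finset.range (2 * h - 1), X (n + k + 1)) + γ n)) :
    ∀ n : ℤ,
      ε / (∏ k ∈ Finset.range (2 * h), X (n + k + 1))
        - 1 / (∏ k ∈ Finset.range (2 * h), X (n + k + 2 * h))
      = -ε * (∏ k ∈ Finset.range (2 * h), X (n + k))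
        + X (n + 4 * h) * ∏ k ∈ Finset.range (2 * h - 1), X (n + k + 2 * h + 1) := by
  intro n
  set m := 2 * h - 1 with hmdef
  have hm : 2 * h = m + 1 := by omega
  set P : ℤ → ℂ := fun n => ∏ k ∈ Finset.range m, X (n + k + 1) with hPdef
  have hP : ∀ n : ℤ, P n ≠ 0 := fun n =>
    Finset.prod_ne_zero_iff.mpr fun k _ => hX _
  have A1 : ∏ k ∈ Finset.range (2 * h), X (n + k + 1) = P n * X (n + 2 * h) := by
    rw [hm, Finset.prod_range_succ]
    congr 2
    omega
  have A2 : ∏ k ∈ Finset.range (2 * h), X (n + k) = X n * P n := by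
    rw [hm, Finset.prod_range_succ']
    rw [mul_comm]
    congr 1
    · push_cast; ring_nf
    · apply Finset.prod_congr rfl
      intro k _
      congr 1
      push_cast
      ring
  have A3 : ∏ k ∈ Finset.range (2 * h), X (n + k + 2 * h)
      = X (n + 2 * h) * P (n + 2 * h) := by
    rw [hm, Finset.prod_range_succ']
    rw [mul_comm]
    congr 1
    · push_cast; ring_nf
    · apply Finset.prod_congr rfl
      intro k _
      congr 1
      push_cast
      ring
  have A4 : ∏ k ∈ Finset.range m, X (n + k + 2 * h + 1) = P (n + 2 * h) := by
    apply Finset.prod_congr rfl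
    intro k _
    congr 1
    ring
  have e1 := hXeq n
  have e2 := hXeq (n + 2 * h)
  have h44 : (n + 2 * h) + 2 * h = n + 4 * h := by push_cast; ring
  rw [h44, hγ n] at e2
  rw [A1, A2, A3, A4]
  have hx1 := hX (n + 2 * h)
  have hx4 := hX (n + 4 * h)
  change X (n + 2 * h) * X n = -(1 / P n) * (1 / P n + γ n) at e1
  change X (n + 4 * h) * X (n + 2 * h)
      = -(1 / P (n + 2 * h)) * (1 / P (n + 2 * h) + ε * γ n) at e2
  have key : ∀ A B g : ℂ, ∀ Q : ℂ, Q ≠ 0 → A * B = -(1 / Q) * (1 / Q + g) →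
      A * B * (Q * Q) = -(1 + g * Q) := by
    intro A B g Q hq e
    rw [e, neg_mul, neg_mul, neg_inj, div_add' _ _ _ hq, div_mul_div_comm,
      one_mul, div_mul_eq_mul_div, mul_div_assoc, div_self (mul_ne_zero hq hq), mul_one]
  have e1' := key _ _ _ _ (hP n) e1
  have e2' := key _ _ _ _ (hP (n + 2 * h)) e2
  have hp1 := hP n
  have hp2 := hP (n + 2 * h)
  field_simp
  linear_combination (ε * P (n + 2 * h)) * e1' - P n * e2'
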